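/- Let γ and m be commuting diagonalizable automorphisms of a finite-dimensional vector space W over a valued field (k, ν), with every eigenvalue β of m satisfying ν(β − 1) > s(γ), where s(γ) = max over eigenvalues α of γ of max{0, ν(α−1)}. Suppose no eigenvalue of γ equals 1 (i.e. det(γ − 1) ≠ 0). Then det(γm − 1) ≠ 0 and moreover ν(det(γm − 1)) = ν(det(γ − 1)). -/

import Mathlib

open Module

lemma aux_det_eq_prod_of_eigenbasis {k W : Type*} [Field k] [AddCommGroup W] [Module k W]
    {ι : Type*} [Fintype ι] [DecidableEq ι] (b : Basis ι k W) (f : Module.End k W)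
    (d : ι → k) (h : ∀ i, f (b i) = d i • b i) :
    LinearMap.det f = ∏ i, d i := by
  rw [← LinearMap.det_toMatrix b, ← Matrix.det_diagonal]
  congr 1
  ext i j
  rw [LinearMap.toMatrix_apply, h j, map_smul]
  rcases eq_or_ne i j with rfl | hij
  · simp
  · simp [Matrix.diagonal_apply_ne _ hij, Finsupp.single_apply, Ne.symm hij]

lemma aux_maxGen_eq_eigen {k W : Type*} [Field k] [AddCommGroup W] [Module k W]
    (f : Module.End k W) (h : (⨆ μ : k, f.eigenspace μ) = ⊤) (μ : k) :
    f.maxGenEigenspace μ = f.eigenspace μ := by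
  have hle : ∀ β : k, f.eigenspace β ≤ f.maxGenEigenspace β :=
    fun β => (f.genEigenspace β).mono le_top
  refine le_antisymm (fun x hx => ?_) (hle μ)
  have hsup : (⊤ : Submodule k W)
      ≤ f.eigenspace μ ⊔ ⨆ (β : k) (_ : β ≠ μ), f.maxGenEigenspace β := by
    rw [← h]
    refine iSup_le fun β => ?_
    rcases eq_or_ne β μ with rfl | hβ
    · exact le_sup_left
    · exact le_trans (le_trans (hle β) (le_iSup₂ (f := fun (β : k) (_ : β ≠ μ) =>
        f.maxGenEigenspace β) β hβ)) le_sup_right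
  obtain ⟨y, hy, z, hz, hyz⟩ := Submodule.mem_sup.mp (hsup Submodule.mem_top : x ∈ _)
  have hdisj : Disjoint (f.maxGenEigenspace μ) (⨆ (β : k) (_ : β ≠ μ), f.maxGenEigenspace β) :=
    f.independent_maxGenEigenspace μ
  have hz1 : z ∈ f.maxGenEigenspace μ := by
    have hy' : y ∈ f.maxGenEigenspace μ := hle μ hy
    have : z = x - y := by rw [← hyz]; abel
    rw [this]; exact Submodule.sub_mem _ hx hy'
  have hz0 : z = 0 := (Submodule.mem_bot k).mp (hdisj.le_bot ⟨hz1, hz⟩)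
  rw [← hyz, hz0, add_zero]; exact hy

lemma aux_val_prod {k : Type*} [Field k] (ν : AddValuation k (WithTop ℤ))
    {ι : Type*} (s : Finset ι) (g : ι → k) :
    ν (∏ i ∈ s, g i) = ∑ i ∈ s, ν (g i) := by
  classical
  induction s using Finset.induction_on with
  | empty => simp
  | insert a s hnot ih => rw [Finset.prod_insert hnot, Finset.sum_insert hnot,
      AddValuation.map_mul, ih]

lemma aux_val_key {k : Type*} [Field k] (ν : AddValuation k (WithTop ℤ))
    {α β : k} {c : WithTop ℤ} (hα : max 0 (ν (α - 1)) ≤ c) (hβ : c < ν (β - 1)) :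
    ν (α * β - 1) = ν (α - 1) := by
  have hβ' : max 0 (ν (α - 1)) < ν (β - 1) := lt_of_le_of_lt hα hβ
  have hrew : α * β - 1 = α * (β - 1) + (α - 1) := by ring
  have hνα : min (ν (α - 1)) 0 ≤ ν α := by
    have := ν.map_add (α - 1) 1
    simpa using this
  have hlt : ν (α - 1) < ν (α * (β - 1)) := by
    rw [AddValuation.map_mul]
    rcases le_total (ν (α - 1)) 0 with h0 | h0
    · have hne : ν (α - 1) ≠ ⊤ := by
        intro h; rw [h] at h0; simp at h0
      have h1 : ν (α - 1) ≤ ν α := le_trans (by simp [min_eq_left h0]) hνα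
      have h2 : (0 : WithTop ℤ) < ν (β - 1) := lt_of_le_of_lt (le_max_left _ _) hβ'
      calc ν (α - 1) = ν (α - 1) + 0 := (add_zero _).symm
        _ < ν (α - 1) + ν (β - 1) := WithTop.add_lt_add_left hne h2
        _ ≤ ν α + ν (β - 1) := add_le_add h1 le_rfl
    · have h1 : (0 : WithTop ℤ) ≤ ν α := le_trans (by simp [min_eq_right h0]) hνα
      calc ν (α - 1) ≤ max 0 (ν (α - 1)) := le_max_right _ _
        _ < ν (β - 1) := hβ'
        _ = 0 + ν (β - 1) := (zero_add _).symm
        _ ≤ ν α + ν (β - 1) := add_le_add h1 le_rfl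
  rw [hrew, AddValuation.map_add_eq_of_lt_right ν hlt]

/-- Corollary `deepness cor` abstracted: if γ, m are commuting diagonalizable
automorphisms, every eigenvalue β of m satisfies ν(β − 1) > s(γ) (where c is an
upper bound for max{0, ν(α−1)} over eigenvalues α of γ), and det(γ − 1) ≠ 0,
then det(γm − 1) ≠ 0 and ν(det(γm − 1)) = ν(det(γ − 1)). -/
theorem det_gamma_m_sub_one
    (k : Type*) [Field k] (ν : AddValuation k (WithTop ℤ))
    (W : Type*) [AddCommGroup W] [Module k W] [FiniteDimensional k W]
    (γ m : Module.End k W) (hcomm : Commute γ m)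
    (hγbij : Function.Bijective γ) (hmbij : Function.Bijective m)
    (hγdiag : (⨆ α : k, γ.eigenspace α) = ⊤)
    (hmdiag : (⨆ β : k, m.eigenspace β) = ⊤)
    (c : WithTop ℤ)
    (hub : ∀ α : k, γ.HasEigenvalue α → max 0 (ν (α - 1)) ≤ c)
    (hmev : ∀ β : k, m.HasEigenvalue β → c < ν (β - 1))
    (hdet : LinearMap.det (γ - 1 : Module.End k W) ≠ 0) :
    LinearMap.det (γ * m - 1 : Module.End k W) ≠ 0 ∧
      ν (LinearMap.det (γ * m - 1 : Module.End k W))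
        = ν (LinearMap.det (γ - 1 : Module.End k W)) := by
  classical
  set f : Bool → Module.End k W := fun b => if b then γ else m with hf
  have hft : f true = γ := rfl
  have hff : f false = m := rfl
  have hcomm2 : ∀ i j, Commute (f i) (f j) := by
    intro i j
    cases i <;> cases j
    · rfl
    · exact hcomm.symm
    · exact hcomm
    · rfl
  have hdiag : ∀ i, (⨆ μ : k, (f i).eigenspace μ) = ⊤ := by
    intro i; cases i
    · exact hmdiag
    · exact hγdiag
  have hmaxeq : ∀ i (μ : k), (f i).maxGenEigenspace μ = (f i).eigenspace μ :=
    fun i => aux_maxGen_eq_eigen (f i) (hdiag i)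
  have hmaxtop : ∀ i, (⨆ μ : k, (f i).maxGenEigenspace μ) = ⊤ := by
    intro i; simp_rw [hmaxeq]; exact hdiag i
  have hT : (⨆ χ : Bool → k, ⨅ i, (f i).maxGenEigenspace (χ i)) = ⊤ :=
    Module.End.iSup_iInf_maxGenEigenspace_eq_top_of_iSup_maxGenEigenspace_eq_top_of_commute f
      (fun i j _ => hcomm2 i j) hmaxtop
  have hInd : iSupIndep fun χ : Bool → k => ⨅ i, (f i).maxGenEigenspace (χ i) :=
    Module.End.independent_iInf_maxGenEigenspace_of_forall_mapsTo f
      (fun i j φ => Module.End.mapsTo_maxGenEigenspace_of_comm (hcomm2 j i) φ)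
  have hInt : DirectSum.IsInternal fun χ : Bool → k => ⨅ i, (f i).maxGenEigenspace (χ i) :=
    DirectSum.isInternal_submodule_of_iSupIndep_of_iSup_eq_top hInd hT
  set A : (Bool → k) → Submodule k W := fun χ => ⨅ i, (f i).maxGenEigenspace (χ i) with hA
  let v : ∀ χ : Bool → k, Basis (Module.Free.ChooseBasisIndex k (A χ)) k (A χ) :=
    fun χ => Module.Free.chooseBasis k (A χ)
  let B := hInt.collectedBasis v
  haveI : Fintype (Σ χ : Bool → k, Module.Free.ChooseBasisIndex k (A χ)) :=
    FiniteDimensional.fintypeBasisIndex B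
  -- eigenvector properties
  have hmemγ : ∀ p : Σ χ : Bool → k, Module.Free.ChooseBasisIndex k (A χ),
      γ (B p) = p.1 true • B p := by
    intro p
    have h1 : B p ∈ A p.1 := hInt.collectedBasis_mem v p
    have h2 : B p ∈ γ.eigenspace (p.1 true) := by
      have := (iInf_le (fun i => (f i).maxGenEigenspace (p.1 i)) true) h1
      rw [hmaxeq true] at this
      exact this
    exact Module.End.mem_eigenspace_iff.mp h2
  have hmemm : ∀ p : Σ χ : Bool → k, Module.Free.ChooseBasisIndex k (A χ),
      m (B p) = p.1 false • B p := by
    intro p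
    have h1 : B p ∈ A p.1 := hInt.collectedBasis_mem v p
    have h2 : B p ∈ m.eigenspace (p.1 false) := by
      have := (iInf_le (fun i => (f i).maxGenEigenspace (p.1 i)) false) h1
      rw [hmaxeq false] at this
      exact this
    exact Module.End.mem_eigenspace_iff.mp h2
  have hevγ : ∀ p : Σ χ : Bool → k, Module.Free.ChooseBasisIndex k (A χ),
      γ.HasEigenvalue (p.1 true) :=
    fun p => Module.End.hasEigenvalue_of_hasEigenvector
      ⟨Module.End.mem_eigenspace_iff.mpr (hmemγ p), B.ne_zero p⟩
  have hevm : ∀ p : Σ χ : Bool → k, Module.Free.ChooseBasisIndex k (A χ),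
      m.HasEigenvalue (p.1 false) :=
    fun p => Module.End.hasEigenvalue_of_hasEigenvector
      ⟨Module.End.mem_eigenspace_iff.mpr (hmemm p), B.ne_zero p⟩
  -- determinants as products
  have hdet1 : LinearMap.det (γ - 1 : Module.End k W) = ∏ p : Σ χ : Bool → k, Module.Free.ChooseBasisIndex k (A χ), (p.1 true - 1) := by
    refine aux_det_eq_prod_of_eigenbasis B _ _ (fun p => ?_)
    simp only [LinearMap.sub_apply, Module.End.one_apply, hmemγ p, sub_smul, one_smul]
  have hdet2 : LinearMap.det (γ * m - 1 : Module.End k W)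
      = ∏ p : Σ χ : Bool → k, Module.Free.ChooseBasisIndex k (A χ), (p.1 true * p.1 false - 1) := by
    refine aux_det_eq_prod_of_eigenbasis B _ _ (fun p => ?_)
    have : (γ * m) (B p) = (p.1 true * p.1 false) • B p := by
      rw [Module.End.mul_apply, hmemm p, map_smul, hmemγ p, smul_smul, mul_comm]
    simp only [LinearMap.sub_apply, Module.End.one_apply, this, sub_smul, one_smul]
  -- each γ-eigenvalue factor is nonzero
  have hne1 : ∀ p : Σ χ : Bool → k, Module.Free.ChooseBasisIndex k (A χ),
      p.1 true - 1 ≠ 0 := by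
    rw [hdet1] at hdet
    intro p
    exact Finset.prod_ne_zero_iff.mp hdet p (Finset.mem_univ p)
  -- key valuation equality per factor
  have hkey : ∀ p : Σ χ : Bool → k, Module.Free.ChooseBasisIndex k (A χ),
      ν (p.1 true * p.1 false - 1) = ν (p.1 true - 1) :=
    fun p => aux_val_key ν (hub _ (hevγ p)) (hmev _ (hevm p))
  constructor
  · rw [hdet2]
    rw [Finset.prod_ne_zero_iff]
    intro p _
    have : ν (p.1 true * p.1 false - 1) ≠ ⊤ := by
      rw [hkey p]
      exact ν.ne_top_iff.mpr (hne1 p)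
    exact ν.ne_top_iff.mp this
  · rw [hdet1, hdet2, aux_val_prod, aux_val_prod]
    exact Finset.sum_congr rfl fun p _ => hkey p
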